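/- If an allocation A = (A_1,...,A_m) is EF1 (for every u, w there is an item j ∈ A_w with V_u(A_u) ≥ V_u(A_w) − V_u(j)), and a second allocation C = (C_1,...,C_m) satisfies V_u(C_u) ≥ V_u(C_w) for all u, w, then the combined allocation (A_1 ∪ C_1, ..., A_m ∪ C_m), where A_u and C_u are disjoint for each u, is EF1. -/
import Mathlib

/-- If allocation A is EF1 and allocation C satisfies V_u(C_u) ≥ V_u(C_w) for
all u, w, then the disjoint union allocation (A_u ∪ C_u) is EF1. -/
theorem union_allocation_EF1
    {m : ℕ} {Item : Type} [DecidableEq Item]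
    (V : Fin m → Item → ℝ) (hV : ∀ u p, 0 ≤ V u p)
    (A C : Fin m → Finset Item)
    (hdisj : ∀ u, Disjoint (A u) (C u))
    (hA : ∀ u w : Fin m, ∃ j ∈ A w,
      ∑ p ∈ A u, V u p ≥ (∑ p ∈ A w, V u p) - V u j)
    (hC : ∀ u w : Fin m, ∑ p ∈ C u, V u p ≥ ∑ p ∈ C w, V u p) :
    ∀ u w : Fin m, ∃ j ∈ A w ∪ C w,
      ∑ p ∈ A u ∪ C u, V u p ≥ ∑ p ∈ (A w ∪ C w).erase j, V u p := by
  intro u w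
  obtain ⟨j, hj, hineq⟩ := hA u w
  refine ⟨j, Finset.mem_union_left _ hj, ?_⟩
  rw [Finset.sum_union (hdisj u),
    Finset.sum_erase_eq_sub (Finset.mem_union_left _ hj),
    Finset.sum_union (hdisj w)]
  have := hC u w
  linarith
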